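/- arXiv:2007.00421 — 4 statements merged into one kernel-verified Lean document; each statement's English description precedes it below -/
import Mathlib

section
/- Define h(t) = (1/e) * (1 + (t-1)/p)^p for t > 0, where p ≥ 1 is a fixed real. Then for every t ∈ [1,3], h(t) - t ≤ max{1/e - 1, (1/e)*(1 + 2/p)^p - 3}, and this maximum is strictly less than e - 3 for every p ≥ 1. -/
open Real

theorem h_minus_t_bound (p : ℝ) (hp : 1 ≤ p) :
    (∀ t ∈ Set.Icc (1 : ℝ) 3,
      (1 / Real.exp 1) * (1 + (t - 1) / p) ^ p - t ≤
        max (1 / Real.exp 1 - 1) ((1 / Real.exp 1) * (1 + 2 / p) ^ p - 3)) ∧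
    max (1 / Real.exp 1 - 1) ((1 / Real.exp 1) * (1 + 2 / p) ^ p - 3) < Real.exp 1 - 3 := by
  have hp0 : 0 < p := lt_of_lt_of_le one_pos hp
  have he : 0 < Real.exp 1 := Real.exp_pos 1
  constructor
  · intro t ht
    obtain ⟨ht1, ht3⟩ := ht
    have hconv := convexOn_rpow hp
    set a := (3 - t) / 2 with ha_def
    set b := (t - 1) / 2 with hb_def
    have ha : 0 ≤ a := by simp [ha_def]; linarith
    have hb : 0 ≤ b := by simp [hb_def]; linarith
    have hab : a + b = 1 := by simp [ha_def, hb_def]; ring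
    have hu : (1 : ℝ) ∈ Set.Ici (0 : ℝ) := by norm_num
    have hv : (1 + 2 / p) ∈ Set.Ici (0 : ℝ) := by
      simp only [Set.mem_Ici]; positivity
    have key := hconv.2 hu hv ha hb hab
    simp only [smul_eq_mul] at key
    have heq : 1 + (t - 1) / p = a * 1 + b * (1 + 2 / p) := by
      field_simp [ha_def, hb_def]; ring
    rw [heq]
    rw [Real.one_rpow] at key
    have h1 : (1 / Real.exp 1 - 1) ≤ max (1 / Real.exp 1 - 1) ((1 / Real.exp 1) * (1 + 2 / p) ^ p - 3) := le_max_left _ _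
    have h2 : ((1 / Real.exp 1) * (1 + 2 / p) ^ p - 3) ≤ max (1 / Real.exp 1 - 1) ((1 / Real.exp 1) * (1 + 2 / p) ^ p - 3) := le_max_right _ _
    have hinv : 0 < 1 / Real.exp 1 := by positivity
    have ht' : t = a * 1 + b * 3 := by field_simp [ha_def, hb_def]; ring
    nlinarith [mul_le_mul_of_nonneg_left key (le_of_lt hinv),
      mul_le_mul_of_nonneg_left h1 ha, mul_le_mul_of_nonneg_left h2 hb]
  · rw [max_lt_iff]
    have hee : Real.exp 1 * (1 / Real.exp 1) = 1 := by field_simp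
    constructor
    · nlinarith [Real.exp_one_gt_d9]
    · have hbpos : (0:ℝ) < 1 + 2 / p := by positivity
      have hne : 1 + 2 / p ≠ 1 := by
        have : 0 < 2 / p := by positivity
        linarith
      have hlog : Real.log (1 + 2 / p) < 2 / p := by
        have := Real.log_lt_sub_one_of_pos hbpos hne
        linarith
      have h2 : p * Real.log (1 + 2 / p) < 2 := by
        have := mul_lt_mul_of_pos_left hlog hp0
        rw [mul_div_cancel₀ _ (ne_of_gt hp0)] at this
        exact this
      have hrw : (1 + 2 / p) ^ p = Real.exp (p * Real.log (1 + 2 / p)) := by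
        rw [Real.rpow_def_of_pos hbpos, mul_comm]
      have hlt : (1 + 2 / p) ^ p < Real.exp 1 * Real.exp 1 := by
        rw [hrw, ← Real.exp_add]
        exact Real.exp_lt_exp.2 (by linarith)
      nlinarith [hlt]
end

section
/- Let p ≥ 1 be real, let e be Euler's number, and set a₀ = 2ℓ/(eℓ - 2) for a real ℓ ≥ 1. Then 1 < 2/(e-2) implies a₀ ≤ 2/(e-2) < 3 whenever a₀ > 1, and the recursively defined sequence a_{n+1} = (1/e)(1 + (a_n - 1)/p)^p satisfies: there exists n₁ ≥ 2 with a_{n₁} < 1. -/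
open Real

lemma key_exp_ineq (t : ℝ) (h1 : 1 ≤ t) (h3 : t ≤ 3) :
    Real.exp (t - 2) ≤ t + (Real.exp 1 - 3) := by
  have hconv := convexOn_exp.2 (Set.mem_univ (-1 : ℝ)) (Set.mem_univ (1 : ℝ))
    (show (0:ℝ) ≤ (3 - t) / 2 by linarith) (show (0:ℝ) ≤ (t - 1) / 2 by linarith)
    (show (3 - t) / 2 + (t - 1) / 2 = 1 by ring)
  simp only [smul_eq_mul] at hconv
  have heq : (3 - t) / 2 * (-1) + (t - 1) / 2 * 1 = t - 2 := by ring
  rw [heq] at hconv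
  have he1 : Real.exp (-1) = 1 / Real.exp 1 := by
    rw [Real.exp_neg]; ring
  have hep : (0:ℝ) < Real.exp 1 := Real.exp_pos 1
  have hlo : (2.7182818283 : ℝ) < Real.exp 1 := Real.exp_one_gt_d9
  rw [he1] at hconv
  have : (3 - t) / 2 * (1 / Real.exp 1) + (t - 1) / 2 * Real.exp 1
      ≤ t + (Real.exp 1 - 3) := by
    rw [div_mul_div_comm, div_add' _ _ _ (by positivity), div_le_iff₀ (by positivity)]
    have hE2 : 0 ≤ Real.exp 1 * Real.exp 1 - 2 * Real.exp 1 - 1 := by nlinarith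
    nlinarith [mul_nonneg (show (0:ℝ) ≤ 3 - t by linarith) hE2]
  linarith

theorem iteration_drops_below_one (p ℓ : ℝ) (hp : 1 ≤ p) (hℓ : 1 ≤ ℓ)
    (a : ℕ → ℝ) (ha0 : a 0 = 2 * ℓ / (Real.exp 1 * ℓ - 2))
    (hrec : ∀ n : ℕ, a (n + 1) = (1 / Real.exp 1) * (1 + (a n - 1) / p) ^ p)
    (ha0_gt : 1 < a 0) :
    (a 0 ≤ 2 / (Real.exp 1 - 2) ∧ 2 / (Real.exp 1 - 2) < 3) ∧
    ∃ n₁ : ℕ, 2 ≤ n₁ ∧ a n₁ < 1 := by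
  have hlo : (2.7182818283 : ℝ) < Real.exp 1 := Real.exp_one_gt_d9
  have hhi : Real.exp 1 < 2.7182818286 := Real.exp_one_lt_d9
  have hep : (0:ℝ) < Real.exp 1 := Real.exp_pos 1
  have hp0 : (0:ℝ) < p := by linarith
  have hden : (0:ℝ) < Real.exp 1 * ℓ - 2 := by nlinarith
  have h1 : a 0 ≤ 2 / (Real.exp 1 - 2) := by
    rw [ha0, div_le_div_iff₀ hden (by nlinarith)]
    nlinarith
  have h2 : 2 / (Real.exp 1 - 2) < 3 := by
    rw [div_lt_iff₀ (by nlinarith)]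
    nlinarith
  have ha03 : a 0 < 3 := lt_of_le_of_lt h1 h2
  refine ⟨⟨h1, h2⟩, ?_⟩
  have hc : (0:ℝ) < 3 - Real.exp 1 := by nlinarith
  have key : ∀ n, (0 ≤ a n ∧ a n < 1) ∨
      (1 ≤ a n ∧ a n < 3 ∧ a n ≤ a 0 - n * (3 - Real.exp 1)) := by
    intro n
    induction n with
    | zero => right; exact ⟨le_of_lt ha0_gt, ha03, by simp⟩
    | succ n ih =>
      rcases ih with ⟨h0, h1'⟩ | ⟨hge, hlt, hbd⟩
      · -- a n ∈ [0,1): stays below 1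
        left
        have hb0 : 0 ≤ 1 + (a n - 1) / p := by
          have : a n - 1 ≤ (a n - 1) / p := by
            rw [le_div_iff₀ hp0]; nlinarith
          linarith
        have hb1 : 1 + (a n - 1) / p ≤ 1 := by
          have : (a n - 1) / p ≤ 0 := by apply div_nonpos_of_nonpos_of_nonneg <;> linarith
          linarith
        have hpow : (1 + (a n - 1) / p) ^ p ≤ 1 :=
          Real.rpow_le_one hb0 hb1 (le_of_lt hp0)
        have hpow0 : 0 ≤ (1 + (a n - 1) / p) ^ p := Real.rpow_nonneg hb0 p
        rw [hrec n]
        constructor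
        · positivity
        · have : (1 / Real.exp 1) * (1 + (a n - 1) / p) ^ p ≤ 1 / Real.exp 1 := by
            nlinarith [one_div_pos.mpr hep]
          have : (1:ℝ) / Real.exp 1 < 1 := by
            rw [div_lt_one hep]; nlinarith
          linarith [mul_le_of_le_one_right (le_of_lt (one_div_pos.mpr hep)) hpow]
      · -- a n ∈ [1,3): descent
        have hb1 : (1:ℝ) ≤ 1 + (a n - 1) / p := by
          have : 0 ≤ (a n - 1) / p := div_nonneg (by linarith) (le_of_lt hp0)
          linarith
        have hbexp : 1 + (a n - 1) / p ≤ Real.exp ((a n - 1) / p) := by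
          have := Real.add_one_le_exp ((a n - 1) / p); linarith
        have hpow : (1 + (a n - 1) / p) ^ p ≤ Real.exp (a n - 1) := by
          calc (1 + (a n - 1) / p) ^ p ≤ (Real.exp ((a n - 1) / p)) ^ p :=
                Real.rpow_le_rpow (by linarith) hbexp (le_of_lt hp0)
            _ = Real.exp ((a n - 1) / p * p) := by
                rw [← Real.exp_mul]
            _ = Real.exp (a n - 1) := by rw [div_mul_cancel₀ _ (ne_of_gt hp0)]
        have hstep : a (n + 1) ≤ Real.exp (a n - 2) := by
          rw [hrec n]
          have : Real.exp (a n - 2) = (1 / Real.exp 1) * Real.exp (a n - 1) := by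
            rw [show a n - 2 = a n - 1 - 1 by ring, Real.exp_sub]; ring
          rw [this]
          have h1e : 0 < 1 / Real.exp 1 := one_div_pos.mpr hep
          nlinarith
        have hkey := key_exp_ineq (a n) hge (le_of_lt hlt)
        have hdrop : a (n + 1) ≤ a n - (3 - Real.exp 1) := by linarith
        have hpos : 0 < a (n + 1) := by
          rw [hrec n]
          have : 0 < (1 + (a n - 1) / p) ^ p := Real.rpow_pos_of_pos (by linarith) p
          positivity
        by_cases hcase : a (n + 1) < 1
        · left; exact ⟨le_of_lt hpos, hcase⟩
        · right
          refine ⟨le_of_not_gt hcase, by linarith, ?_⟩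
          push_cast
          have : a n ≤ a 0 - n * (3 - Real.exp 1) := hbd
          nlinarith
  refine ⟨8, by norm_num, ?_⟩
  rcases key 8 with ⟨_, h⟩ | ⟨_, _, hbd⟩
  · exact h
  · push_cast at hbd
    nlinarith
end

section
/- For every real t ≥ 1 and every real α ≤ 1/2 with α ≥ 0, the function f(t,α) = (Γ(t+2))^{1/(t+1)} / e * (α + (1/e)*((t+1)/(2t))*(1-α))^{t/(t+1)} satisfies f(t,α) ≤ f(t,1/2) ≤ t/2 ≤ t(1-α). -/
open Real

noncomputable def fTA (t α : ℝ) : ℝ :=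
  (Real.Gamma (t + 2)) ^ (1 / (t + 1)) / Real.exp 1 *
    (α + (1 / Real.exp 1) * ((t + 1) / (2 * t)) * (1 - α)) ^ (t / (t + 1))

theorem fTA_gamma_le_one {t : ℝ} (h1 : 1 ≤ t) (h2 : t ≤ 2) : Real.Gamma t ≤ 1 := by
  have hc := Real.convexOn_log_Gamma
  have h := hc.2 (Set.mem_Ioi.mpr one_pos) (Set.mem_Ioi.mpr two_pos)
    (show (0:ℝ) ≤ 2 - t by linarith) (show (0:ℝ) ≤ t - 1 by linarith) (by ring)
  simp only [smul_eq_mul, Function.comp_apply, Real.Gamma_one, Real.log_one] at h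
  have h2g : Real.Gamma 2 = 1 := by
    rw [show (2:ℝ) = 1 + 1 by norm_num, Real.Gamma_add_one one_ne_zero, Real.Gamma_one, mul_one]
  rw [h2g, Real.log_one] at h
  have ht : (2 - t) * 1 + (t - 1) * 2 = t := by ring
  rw [ht] at h
  have hpos : 0 < Real.Gamma t := Real.Gamma_pos_of_pos (by linarith)
  exact (Real.log_nonpos_iff hpos.le).mp (by linarith)

theorem fTA_K_aux (n : ℕ) : ∀ t : ℝ, 1 ≤ t → t ≤ n + 2 →
    Real.Gamma (t + 2) ≤ ((t + 3) / 2) ^ (t + 1) := by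
  induction n with
  | zero =>
    intro t h1 h2
    norm_num at h2
    have hG : Real.Gamma (t + 2) = (t + 1) * (t * Real.Gamma t) := by
      rw [show t + 2 = (t + 1) + 1 by ring, Real.Gamma_add_one (by linarith : t + 1 ≠ 0),
        Real.Gamma_add_one (by linarith : t ≠ 0)]
    have h3 : Real.Gamma (t + 2) ≤ t * (t + 1) := by
      rw [hG]
      have hgl := fTA_gamma_le_one h1 h2
      have h' := mul_le_mul_of_nonneg_left
        (mul_le_mul_of_nonneg_left hgl (by linarith : (0:ℝ) ≤ t)) (by linarith : (0:ℝ) ≤ t + 1)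
      nlinarith [h']
    have h4 : t * (t + 1) ≤ ((t + 3) / 2) ^ (2 : ℝ) := by
      rw [Real.rpow_two]; nlinarith
    have h5 : ((t + 3) / 2) ^ (2 : ℝ) ≤ ((t + 3) / 2) ^ (t + 1) :=
      Real.rpow_le_rpow_of_exponent_le (by linarith) (by linarith)
    linarith
  | succ n ih =>
    intro t h1 h2
    rcases le_or_gt t (n + 2) with h | h
    · exact ih t h1 h
    · have hn0 : (0:ℝ) ≤ n := Nat.cast_nonneg n
      have h1' : (1:ℝ) ≤ t - 1 := by linarith
      have ihx := ih (t - 1) h1' (by push_cast at h2 ⊢; linarith)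
      rw [show t - 1 + 2 = t + 1 by ring, show t - 1 + 3 = t + 2 by ring,
        show t - 1 + 1 = t by ring] at ihx
      have hrec : Real.Gamma (t + 2) = (t + 1) * Real.Gamma (t + 1) := by
        rw [show t + 2 = (t + 1) + 1 by ring, Real.Gamma_add_one (by linarith : t + 1 ≠ 0)]
      have hX0 : (0:ℝ) < ((t + 2) / 2) ^ t := Real.rpow_pos_of_pos (by linarith) t
      have hstep : (t + 1) * ((t + 2) / 2) ^ t ≤ ((t + 3) / 2) ^ (t + 1) := by
        have hsplit : ((t + 3) / 2 : ℝ) = (t + 2) / 2 * (1 + 1 / (t + 2)) := by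
          field_simp; ring
        have hbern : (1:ℝ) + t * (1 / (t + 2)) ≤ (1 + 1 / (t + 2)) ^ t :=
          one_add_mul_self_le_rpow_one_add
            (by nlinarith [div_nonneg (zero_le_one (α := ℝ)) (by linarith : (0:ℝ) ≤ t + 2)]) h1
        have hb' : ((2 * t + 2) / (t + 2) : ℝ) ≤ (1 + 1 / (t + 2)) ^ t := by
          have heq : ((2 * t + 2) / (t + 2) : ℝ) = 1 + t * (1 / (t + 2)) := by
            field_simp; ring
          rw [heq]; exact hbern
        calc (t + 1) * ((t + 2) / 2) ^ t
            ≤ ((t + 2) / 2) ^ t * ((2 * t + 2) / (t + 2)) * ((t + 3) / 2) := by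
              have he : ((t + 2) / 2 : ℝ) ^ t * ((2 * t + 2) / (t + 2)) * ((t + 3) / 2)
                  = ((t + 2) / 2) ^ t * ((t + 1) * ((t + 3) / (t + 2))) := by
                field_simp
              rw [he]
              have h13 : (1:ℝ) ≤ (t + 3) / (t + 2) := by
                rw [le_div_iff₀ (by linarith : (0:ℝ) < t + 2)]; linarith
              have h14 : (t + 1 : ℝ) ≤ (t + 1) * ((t + 3) / (t + 2)) := by
                nlinarith [mul_le_mul_of_nonneg_left h13 (show (0:ℝ) ≤ t + 1 by linarith)]
              have := mul_le_mul_of_nonneg_left h14 hX0.le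
              nlinarith [this]
          _ ≤ ((t + 2) / 2) ^ t * ((1 + 1 / (t + 2)) ^ t) * ((t + 3) / 2) :=
              mul_le_mul_of_nonneg_right
                (mul_le_mul_of_nonneg_left hb' hX0.le) (show (0:ℝ) ≤ (t + 3) / 2 by linarith)
          _ = ((t + 3) / 2) ^ (t + 1) := by
              rw [Real.rpow_add (by linarith : (0:ℝ) < (t + 3) / 2), Real.rpow_one, hsplit,
                Real.mul_rpow (by linarith) (by positivity)]
      calc Real.Gamma (t + 2) = (t + 1) * Real.Gamma (t + 1) := hrec
        _ ≤ (t + 1) * ((t + 2) / 2) ^ t := by nlinarith [ihx]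
        _ ≤ ((t + 3) / 2) ^ (t + 1) := hstep

set_option maxHeartbeats 2000000 in
theorem fTA_bounds (t α : ℝ) (ht : 1 ≤ t) (hα0 : 0 ≤ α) (hα : α ≤ 1 / 2) :
    fTA t α ≤ fTA t (1 / 2) ∧ fTA t (1 / 2) ≤ t / 2 ∧ t / 2 ≤ t * (1 - α) := by
  have ht0 : (0:ℝ) < t := by linarith
  have hE1 : (2.7182818283:ℝ) < Real.exp 1 := Real.exp_one_gt_d9
  have hE2 : Real.exp 1 < 2.7182818286 := Real.exp_one_lt_d9
  have hE0 : (0:ℝ) < Real.exp 1 := Real.exp_pos 1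
  have hfrac0 : (0:ℝ) ≤ (t + 1) / (2 * t) := div_nonneg (by linarith) (by linarith)
  have hfrac1 : (t + 1) / (2 * t) ≤ 1 := by
    rw [div_le_one (by linarith)]; linarith
  have hEinv0 : (0:ℝ) < 1 / Real.exp 1 := by positivity
  have hEinv : (1:ℝ) / Real.exp 1 ≤ 1 / 2 := by
    rw [div_le_div_iff₀ hE0 (by norm_num)]; linarith
  have hΓ0 : (0:ℝ) < Real.Gamma (t + 2) := Real.Gamma_pos_of_pos (by linarith)
  have hcc0 : (0:ℝ) ≤ 1 / Real.exp 1 * ((t + 1) / (2 * t)) := mul_nonneg hEinv0.le hfrac0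
  have hcc1 : 1 / Real.exp 1 * ((t + 1) / (2 * t)) ≤ 1 := by
    nlinarith [mul_le_mul_of_nonneg_left hfrac1 hEinv0.le]
  -- part 1
  refine ⟨?_, ?_, ?_⟩
  · unfold fTA
    apply mul_le_mul_of_nonneg_left
    · apply Real.rpow_le_rpow
      · nlinarith [mul_nonneg hcc0 (show (0:ℝ) ≤ 1 - α by linarith)]
      · nlinarith [mul_nonneg (show (0:ℝ) ≤ 1 - 1 / Real.exp 1 * ((t + 1) / (2 * t)) by linarith)
          (show (0:ℝ) ≤ 1 / 2 - α by linarith)]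
      · positivity
    · positivity
  · -- part 2
    unfold fTA
    set B : ℝ := 1 / 2 + 1 / Real.exp 1 * ((t + 1) / (2 * t)) * (1 - 1 / 2) with hBdef
    have hB0 : (0:ℝ) < B := by
      rw [hBdef]
      nlinarith [mul_nonneg hcc0 (show (0:ℝ) ≤ 1 - 1/2 by norm_num)]
    have hBle : B ≤ (1 + 1 / Real.exp 1) / 2 := by
      rw [hBdef]
      nlinarith [mul_le_mul_of_nonneg_left hfrac1 hEinv0.le]
    clear_value B
    have hB1 : B ≤ 1 := hBle.trans (by linarith)
    have hp0 : (0:ℝ) < t + 1 := by linarith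
    -- key inequality
    have key : Real.Gamma (t + 2) * B ^ t ≤ (t * Real.exp 1 / 2) ^ (t + 1) := by
      rcases lt_or_ge t 2 with h2 | h2
      · -- 1 ≤ t < 2
        have hG : Real.Gamma (t + 2) ≤ t * (t + 1) := by
          have hGe : Real.Gamma (t + 2) = (t + 1) * (t * Real.Gamma t) := by
            rw [show t + 2 = (t + 1) + 1 by ring, Real.Gamma_add_one (by linarith : t + 1 ≠ 0),
              Real.Gamma_add_one (by linarith : t ≠ 0)]
          rw [hGe]
          have hgl := fTA_gamma_le_one ht h2.le
          nlinarith [mul_le_mul_of_nonneg_left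
            (mul_le_mul_of_nonneg_left hgl (by linarith : (0:ℝ) ≤ t))
            (by linarith : (0:ℝ) ≤ t + 1)]
        have hBt : B ^ t ≤ (1 + 1 / Real.exp 1) / 2 := by
          calc B ^ t ≤ ((1 + 1 / Real.exp 1) / 2) ^ t :=
                Real.rpow_le_rpow hB0.le hBle (by linarith)
            _ ≤ ((1 + 1 / Real.exp 1) / 2) ^ (1:ℝ) :=
                Real.rpow_le_rpow_of_exponent_ge (by positivity) (by linarith) ht
            _ = (1 + 1 / Real.exp 1) / 2 := Real.rpow_one _
        have hmain : t * (t + 1) * ((1 + 1 / Real.exp 1) / 2) ≤ (t * Real.exp 1 / 2) ^ (2:ℝ) := by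
          rw [Real.rpow_two]
          have hu : (1:ℝ) / Real.exp 1 ≤ 0.37 := by
            rw [div_le_iff₀ hE0]; nlinarith
          have hA : t * (t + 1) ≤ 2 * (t * t) := by nlinarith
          have hAB : t * (t + 1) * ((1 + 1 / Real.exp 1) / 2) ≤ 2 * (t * t) * 0.685 := by
            apply mul_le_mul hA (by linarith) (by positivity) (by nlinarith)
          have hEsq : (7.3:ℝ) ≤ Real.exp 1 * Real.exp 1 := by
            nlinarith [sq_nonneg (Real.exp 1 - 2.71)]
          have hC : 2 * (t * t) * 0.685 ≤ (t * Real.exp 1 / 2) ^ 2 := by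
            have h0 : (0:ℝ) ≤ t * t := mul_nonneg ht0.le ht0.le
            nlinarith [mul_nonneg h0 (show (0:ℝ) ≤ Real.exp 1 * Real.exp 1 - 7.3 by linarith)]
          linarith
        have hexp : (t * Real.exp 1 / 2) ^ (2:ℝ) ≤ (t * Real.exp 1 / 2) ^ (t + 1) :=
          Real.rpow_le_rpow_of_exponent_le (by nlinarith) (by linarith)
        have hmul : Real.Gamma (t + 2) * B ^ t ≤ t * (t + 1) * ((1 + 1 / Real.exp 1) / 2) :=
          mul_le_mul hG hBt (Real.rpow_nonneg hB0.le t) (by nlinarith)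
        linarith
      · -- t ≥ 2
        obtain ⟨n, hn⟩ := exists_nat_ge t
        have hK := fTA_K_aux n t ht (by push_cast; linarith)
        have hsplit : ((t + 3) / 2 : ℝ) = t * Real.exp 1 / 2 * ((t + 3) / (t * Real.exp 1)) := by
          field_simp
        have hq1 : ((t + 3) / (t * Real.exp 1) : ℝ) ≤ 1 := by
          rw [div_le_one (by positivity)]; nlinarith
        calc Real.Gamma (t + 2) * B ^ t
            ≤ ((t + 3) / 2) ^ (t + 1) * B ^ t :=
              mul_le_mul_of_nonneg_right hK (Real.rpow_nonneg hB0.le t)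
          _ = (t * Real.exp 1 / 2) ^ (t + 1) * (((t + 3) / (t * Real.exp 1)) ^ (t + 1) * B ^ t) := by
              rw [hsplit, Real.mul_rpow (by positivity) (by positivity)]; ring
          _ ≤ (t * Real.exp 1 / 2) ^ (t + 1) * 1 := by
              apply mul_le_mul_of_nonneg_left _ (Real.rpow_nonneg (by positivity) _)
              have ha := Real.rpow_le_one (by positivity) hq1 (by linarith : (0:ℝ) ≤ t + 1)
              have hb := Real.rpow_le_one hB0.le hB1 (by linarith : (0:ℝ) ≤ t)
              nlinarith [Real.rpow_nonneg hB0.le t,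
                Real.rpow_nonneg (show (0:ℝ) ≤ (t + 3) / (t * Real.exp 1) by positivity) (t + 1)]
          _ = (t * Real.exp 1 / 2) ^ (t + 1) := mul_one _
    -- conclude
    have hLHS0 : (0:ℝ) ≤ Real.Gamma (t + 2) ^ (1 / (t + 1)) / Real.exp 1 * B ^ (t / (t + 1)) := by
      positivity
    rw [← Real.rpow_le_rpow_iff hLHS0 (by linarith : (0:ℝ) ≤ t / 2) hp0]
    have e1 : 1 / (t + 1) * (t + 1) = 1 := by field_simp
    have e2 : t / (t + 1) * (t + 1) = t := by field_simp
    have hL : (Real.Gamma (t + 2) ^ (1 / (t + 1)) / Real.exp 1 * B ^ (t / (t + 1))) ^ (t + 1)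
        = Real.Gamma (t + 2) * B ^ t / Real.exp 1 ^ (t + 1) := by
      rw [Real.mul_rpow (by positivity) (Real.rpow_nonneg hB0.le _),
        Real.div_rpow (Real.rpow_nonneg hΓ0.le _) hE0.le,
        ← Real.rpow_mul hΓ0.le, ← Real.rpow_mul hB0.le, e1, e2, Real.rpow_one]
      ring
    have hR : ((t:ℝ) / 2) ^ (t + 1) = (t * Real.exp 1 / 2) ^ (t + 1) / Real.exp 1 ^ (t + 1) := by
      rw [← Real.div_rpow (by positivity) hE0.le]
      congr 1
      field_simp
    rw [hL, hR]
    exact div_le_div_of_nonneg_right key (by positivity)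
  · nlinarith [mul_le_mul_of_nonneg_left (show (1:ℝ)/2 ≤ 1 - α by linarith)
      (by linarith : (0:ℝ) ≤ t)]
end

section
/- For every real t ≥ 1, the function f₁(t) = 2*(Γ(t+2))^{1/(t+1)} * (2t/(e(t+1))) * (2/e)^{t/(t+1)} satisfies f₁(t) < t. -/
open Real


lemma gamma3 : Real.Gamma 3 = 2 := by
  rw [show (3:ℝ) = (2:ℕ)+1 by norm_num, Real.Gamma_nat_eq_factorial]
  norm_num [Nat.factorial]

lemma gamma4 : Real.Gamma 4 = 6 := by
  rw [show (4:ℝ) = (3:ℕ)+1 by norm_num, Real.Gamma_nat_eq_factorial]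
  norm_num [Nat.factorial]

-- L1 : interpolation
lemma interp (x : ℝ) (h3 : 3 ≤ x) (h4 : x ≤ 4) :
    Real.Gamma x ≤ 2 ^ (4-x) * 6 ^ (x-3) := by
  rcases eq_or_lt_of_le h3 with rfl | h3'
  · rw [gamma3]; norm_num [Real.rpow_natCast]
  rcases eq_or_lt_of_le h4 with rfl | h4'
  · rw [gamma4]; norm_num [Real.rpow_natCast]
  have key := Real.Gamma_mul_add_mul_le_rpow_Gamma_mul_rpow_Gamma
    (s := 3) (t := 4) (a := 4 - x) (b := x - 3)
    (by norm_num) (by norm_num) (by linarith) (by linarith) (by ring)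
  rw [show (4-x) * 3 + (x-3) * 4 = x by ring, gamma3, gamma4] at key
  exact key

-- L2 : base numeric bound
lemma base (x : ℝ) (h3 : 3 ≤ x) (h4 : x ≤ 4) :
    2 ^ (4-x) * 6 ^ (x-3) ≤ (23/25) * (x/2) ^ (x-1) := by
  have hx0 : (0:ℝ) < x := by linarith
  have hL : (0:ℝ) < 2 ^ (4-x) * 6 ^ (x-3) := by positivity
  have hR : (0:ℝ) < (23/25) * (x/2) ^ (x-1) := by positivity
  rw [← Real.log_le_log_iff hL hR]
  rw [Real.log_mul (by positivity) (by positivity),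
      Real.log_mul (by norm_num) (by positivity),
      Real.log_rpow (by norm_num), Real.log_rpow (by norm_num),
      Real.log_rpow (by positivity),
      Real.log_div (by positivity) (by norm_num),
      show (6:ℝ) = 2*3 by norm_num, Real.log_mul (by norm_num) (by norm_num)]
  set l2 := Real.log 2 with hl2def
  set l3 := Real.log 3 with hl3def
  -- bound : log x ≥ log 3 + (x-3)/x
  have hlx : l3 + (x-3)/x ≤ Real.log x := by
    have h := Real.one_sub_inv_le_log_of_pos (x := x/3) (by positivity)
    rw [Real.log_div (by positivity) (by norm_num)] at h
    have : (x/3)⁻¹ = 3/x := by field_simp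
    rw [this] at h
    have : 1 - 3/x = (x-3)/x := by field_simp
    linarith [this ▸ h]
  have B : x*(x-1)*(l3 + (x-3)/x) ≤ x*(x-1)*Real.log x := by
    apply mul_le_mul_of_nonneg_left hlx; nlinarith
  have B' : x*(x-1)*(l3 + (x-3)/x) = x*(x-1)*l3 + (x-1)*(x-3) := by
    field_simp
  rw [B'] at B
  -- bound : log(23/25) ≥ -2/23
  have hc : Real.log (23/25) ≥ -(2/23) := by
    have h := Real.log_le_sub_one_of_pos (x := (25/23:ℝ)) (by norm_num)
    have : Real.log (23/25) = - Real.log (25/23) := by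
      rw [← Real.log_inv]; norm_num
    rw [this]; linarith [h]
  -- bound : 2*l3 ≥ 3*l2 + 1/9
  have h9 : 2*l3 ≥ 3*l2 + 1/9 := by
    have h1 : Real.log 9 = 2*l3 := by
      rw [show (9:ℝ) = 3^2 by norm_num, Real.log_pow]; push_cast; ring
    have h2 : Real.log 9 = 3*l2 + Real.log (9/8) := by
      rw [show (9:ℝ) = 8*(9/8) by norm_num, Real.log_mul (by norm_num) (by norm_num),
          show (8:ℝ) = 2^3 by norm_num, Real.log_pow]
      push_cast; rw [hl2def]; ring
    have h3 : Real.log (9/8) ≥ 1/9 := by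
      have := Real.one_sub_inv_le_log_of_pos (x := (9/8:ℝ)) (by norm_num)
      norm_num at this; linarith
    linarith
  have hl2u : l2 < 0.6931472 := by
    have := Real.log_two_lt_d9; rw [hl2def]; linarith
  have hl2l : (0:ℝ) < l2 := Real.log_pos (by norm_num)
  -- main polynomial estimate
  have key : l2 * (x*(x-3)) ≤ 5*x/207 + (x-1)*(x-3) := by
    nlinarith [sq_nonneg (x - 309/100), sq_nonneg (x-3), sq_nonneg (4-x), hl2u, hl2l,
      mul_nonneg (sub_nonneg.2 h3) (sub_nonneg.2 h4)]
  -- assemble: goal is (4-x)*l2 + (x-3)*(l2+l3) ≤ log(23/25) + (x-1)*(log x - l2)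
  have goalx : x*((4-x)*l2 + (x-3)*(l2+l3)) ≤ x*(Real.log (23/25) + (x-1)*(Real.log x - l2)) := by
    nlinarith [B, mul_le_mul_of_nonneg_left hc (le_of_lt hx0),
      mul_le_mul_of_nonneg_left h9 (le_of_lt hx0), key]
  have h5 := (mul_le_mul_iff_right₀ hx0).mp goalx
  have e1 : Real.log (23/25) = Real.log 23 - Real.log 25 := Real.log_div (by norm_num) (by norm_num)
  have e2 : Real.log (x/2) = Real.log x - l2 := Real.log_div hx0.ne' (by norm_num)
  rw [e2]
  linarith [h5, e1.symm.le, e1.le]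

-- L3 : recursion step inequality
lemma step (x : ℝ) (h4 : 4 ≤ x) :
    (x-1) * ((x-1)/2) ^ (x-2) ≤ (x/2) ^ (x-1) := by
  have hx1 : (0:ℝ) < x - 1 := by linarith
  have hL : (0:ℝ) < (x-1) * ((x-1)/2) ^ (x-2) := by positivity
  have hR : (0:ℝ) < (x/2) ^ (x-1) := by positivity
  rw [← Real.log_le_log_iff hL hR,
      Real.log_mul hx1.ne' (by positivity),
      Real.log_rpow (by positivity), Real.log_rpow (by positivity),
      Real.log_div hx1.ne' (by norm_num), Real.log_div (by positivity : (0:ℝ)<x).ne' (by norm_num)]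
  -- reduces to: log(x-1) + (x-2)(log(x-1)-log 2) ≤ (x-1)(log x - log 2)
  -- i.e. (x-1)(log x - log(x-1)) ≥ log 2
  have hlog : Real.log x - Real.log (x-1) ≥ 1/x := by
    have h := Real.one_sub_inv_le_log_of_pos (x := x/(x-1)) (by positivity)
    rw [Real.log_div (by positivity) hx1.ne'] at h
    have e : (x/(x-1))⁻¹ = (x-1)/x := by field_simp
    rw [e] at h
    have : 1 - (x-1)/x = 1/x := by field_simp; ring
    linarith [this ▸ h]
  have hmul : (x-1)*(Real.log x - Real.log (x-1)) ≥ (x-1)*(1/x) := by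
    apply mul_le_mul_of_nonneg_left hlog (by linarith)
  have hfrac : (x-1)*(1/x) ≥ 3/4 := by
    rw [ge_iff_le, mul_one_div, le_div_iff₀ (show (0:ℝ)<x by linarith)]
    nlinarith
  have hl2 : Real.log 2 < 0.6931472 := by linarith [Real.log_two_lt_d9]
  nlinarith [hmul, hfrac, hl2]



lemma gamma_bound_aux : ∀ n : ℕ, ∀ x : ℝ, 3 ≤ x → x ≤ 4 + n →
    Real.Gamma x ≤ (23/25) * (x/2) ^ (x-1) := by
  intro n
  induction n with
  | zero =>
    intro x h3 h4
    push_cast at h4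
    exact le_trans (interp x h3 (by linarith)) (base x h3 (by linarith))
  | succ n ih =>
    intro x h3 hx
    by_cases h : x ≤ 4 + n
    · exact ih x h3 h
    push_neg at h
    have hn : (0:ℝ) ≤ n := Nat.cast_nonneg n
    have hx4 : 4 ≤ x := by linarith
    have hx1 : 3 ≤ x - 1 := by linarith
    have hx1' : x - 1 ≤ 4 + n := by push_cast at hx ⊢; linarith
    have hgam : Real.Gamma x = (x-1) * Real.Gamma (x-1) := by
      have h' := Real.Gamma_add_one (s := x - 1) (by intro hz; rw [hz] at hx1; norm_num at hx1)
      rw [sub_add_cancel] at h'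
      exact h'
    have hih := ih (x-1) hx1 hx1'
    rw [show x - 1 - 1 = x - 2 by ring] at hih
    calc Real.Gamma x = (x-1) * Real.Gamma (x-1) := hgam
      _ ≤ (x-1) * ((23/25) * ((x-1)/2) ^ (x-2)) :=
          mul_le_mul_of_nonneg_left hih (by linarith)
      _ = (23/25) * ((x-1) * ((x-1)/2) ^ (x-2)) := by ring
      _ ≤ (23/25) * (x/2) ^ (x-1) :=
          mul_le_mul_of_nonneg_left (step x hx4) (by norm_num)

lemma gamma_bound (x : ℝ) (h3 : 3 ≤ x) : Real.Gamma x ≤ (23/25) * (x/2) ^ (x-1) := by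
  apply gamma_bound_aux ⌈x⌉₊ x h3
  have h1 : x ≤ (⌈x⌉₊ : ℝ) := Nat.le_ceil x
  linarith

set_option maxHeartbeats 1000000 in
theorem f1_lt_self (t : ℝ) (ht : 1 ≤ t) :
    2 * (Real.Gamma (t + 2)) ^ (1 / (t + 1)) * (2 * t / (Real.exp 1 * (t + 1))) *
      (2 / Real.exp 1) ^ (t / (t + 1)) < t := by
  have ht1 : (0:ℝ) < t + 1 := by linarith
  have ht0 : (0:ℝ) < t := by linarith
  have hE : (0:ℝ) < Real.exp 1 := Real.exp_pos 1
  have hG : 0 < Real.Gamma (t+2) := Real.Gamma_pos_of_pos (by linarith)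
  set E := Real.exp 1 with hEdef
  set A := 2 * (Real.Gamma (t + 2)) ^ (1 / (t + 1)) * (2 / (E * (t + 1))) *
      (2 / E) ^ (t / (t + 1)) with hA
  have hA0 : 0 < A := by
    rw [hA]; positivity
  have lhs_eq : 2 * (Real.Gamma (t + 2)) ^ (1 / (t + 1)) * (2 * t / (E * (t + 1))) *
      (2 / E) ^ (t / (t + 1)) = A * t := by rw [hA]; ring
  rw [lhs_eq]
  suffices hA1 : A < 1 by
    calc A * t < 1 * t := mul_lt_mul_of_pos_right hA1 ht0
      _ = t := one_mul t
  -- compute A ^ (t+1)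
  have e1 : ((Real.Gamma (t+2)) ^ (1/(t+1))) ^ (t+1) = Real.Gamma (t+2) := by
    rw [← Real.rpow_mul hG.le, one_div, inv_mul_cancel₀ ht1.ne', Real.rpow_one]
  have e2 : ((2/E) ^ (t/(t+1))) ^ (t+1) = (2/E) ^ t := by
    rw [← Real.rpow_mul (by positivity)]
    congr 1
    field_simp
  have hApow : A ^ (t+1) = (4/(E*(t+1)))^(t+1) * (Real.Gamma (t+2) * (2/E)^t) := by
    rw [hA,
      Real.mul_rpow (by positivity) (by positivity),
      Real.mul_rpow (by positivity) (by positivity),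
      Real.mul_rpow (by norm_num) (by positivity),
      e1, e2,
      show (4:ℝ)/(E*(t+1)) = 2 * (2/(E*(t+1))) by ring,
      Real.mul_rpow (by norm_num) (by positivity)]
    ring
  -- bound Gamma
  have hb1 : Real.Gamma (t+2) ≤ (23/25) * ((t+2)/2)^(t+1) := by
    have h := gamma_bound (t+2) (by linarith)
    rwa [show t+2-1 = t+1 by ring] at h
  -- combine
  have comb : (4/(E*(t+1)))^(t+1) * (((t+2)/2)^(t+1)) = (2*(t+2)/(E*(t+1)))^(t+1) := by
    rw [← Real.mul_rpow (by positivity) (by positivity)]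
    congr 1
    field_simp
    ring
  have hb2 : (2*(t+2)/(E*(t+1)))^(t+1) ≤ (2/E)^(t+1) * E := by
    have hbase : 2*(t+2)/(E*(t+1)) ≤ (2/E) * Real.exp (1/(t+1)) := by
      have h1 : 2*(t+2)/(E*(t+1)) = (2/E) * (1 + 1/(t+1)) := by field_simp; ring
      have h2 : (1:ℝ) + 1/(t+1) ≤ Real.exp (1/(t+1)) := by
        have := Real.add_one_le_exp (1/(t+1)); linarith
      rw [h1]
      apply mul_le_mul_of_nonneg_left h2 (by positivity)
    calc (2*(t+2)/(E*(t+1)))^(t+1) ≤ ((2/E) * Real.exp (1/(t+1)))^(t+1) :=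
          Real.rpow_le_rpow (by positivity) hbase (by positivity)
      _ = (2/E)^(t+1) * (Real.exp (1/(t+1)))^(t+1) :=
          Real.mul_rpow (by positivity) (by positivity)
      _ = (2/E)^(t+1) * E := by
          rw [← Real.exp_mul, show 1/(t+1)*(t+1) = 1 by field_simp]
  have hchain : A ^ (t+1) ≤ (23/25) * ((2/E)^(t+1) * E) * (2/E)^t := by
    rw [hApow]
    calc (4/(E*(t+1)))^(t+1) * (Real.Gamma (t+2) * (2/E)^t)
        ≤ (4/(E*(t+1)))^(t+1) * (((23/25) * ((t+2)/2)^(t+1)) * (2/E)^t) := by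
          apply mul_le_mul_of_nonneg_left _ (by positivity)
          exact mul_le_mul_of_nonneg_right hb1 (by positivity)
      _ = (23/25) * ((4/(E*(t+1)))^(t+1) * ((t+2)/2)^(t+1)) * (2/E)^t := by ring
      _ = (23/25) * (2*(t+2)/(E*(t+1)))^(t+1) * (2/E)^t := by rw [comb]
      _ ≤ (23/25) * ((2/E)^(t+1) * E) * (2/E)^t := by
          apply mul_le_mul_of_nonneg_right _ (by positivity)
          exact mul_le_mul_of_nonneg_left hb2 (by norm_num)
  -- numeric: (23/25) * (2/E)^(t+1) * E * (2/E)^t < 1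
  have hnum : (23/25) * ((2/E)^(t+1) * E) * (2/E)^t < 1 := by
    have hcollect : (2/E)^(t+1) * (2/E)^t = (2/E)^(2*t+1) := by
      rw [← Real.rpow_add (by positivity)]; ring_nf
    have hEpow : (2/E)^(2*t+1) = 2^(2*t+1) / Real.exp (2*t+1) := by
      rw [Real.div_rpow (by norm_num) hE.le, hEdef, Real.exp_one_rpow]
    have h2pow : (2:ℝ)^(2*t+1) = 4^t * 2 := by
      rw [Real.rpow_add (by norm_num), Real.rpow_one, Real.rpow_mul (by norm_num)]
      norm_num
    have hexp : Real.exp (2*t+1) = (Real.exp 2)^t * E := by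
      rw [Real.exp_add, hEdef, Real.exp_mul]
    have he2eq : Real.exp 2 = E * E := by
      rw [show (2:ℝ) = 1 + 1 by norm_num, Real.exp_add]
    have he2 : Real.exp 2 > 7.38 := by
      rw [he2eq, hEdef]
      nlinarith [Real.exp_one_gt_d9]
    have h4t : (0:ℝ) < 4^t := Real.rpow_pos_of_pos (by norm_num) t
    have hexp2 : (Real.exp 2 / 4) * 4^t ≤ (Real.exp 2)^t := by
      have h1 : (Real.exp 2)^t = (Real.exp 2/4)^t * 4^t := by
        rw [← Real.mul_rpow (by positivity) (by norm_num)]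
        norm_num
      have h2 : (Real.exp 2/4)^(1:ℝ) ≤ (Real.exp 2/4)^t :=
        Real.rpow_le_rpow_of_exponent_le (by linarith) ht
      rw [Real.rpow_one] at h2
      rw [h1]
      exact mul_le_mul_of_nonneg_right h2 h4t.le
    have hb : (0:ℝ) < (Real.exp 2)^t := Real.rpow_pos_of_pos (Real.exp_pos 2) t
    have hkey : (23/25) * 2^(2*t+1) < (Real.exp 2)^t := by
      rw [h2pow]
      calc 23/25 * (4^t * 2) = (46/25) * 4^t := by ring
        _ < (Real.exp 2/4) * 4^t := by
            apply mul_lt_mul_of_pos_right _ h4t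
            linarith
        _ ≤ (Real.exp 2)^t := hexp2
    have heq : (23/25) * ((2/E)^(t+1) * E) * (2/E)^t
        = (23/25) * 2^(2*t+1) / ((Real.exp 2)^t) := by
      rw [show (23/25) * ((2/E)^(t+1) * E) * (2/E)^t
            = (23/25) * E * ((2/E)^(t+1) * (2/E)^t) by ring,
          hcollect, hEpow, hexp]
      field_simp
    rw [heq, div_lt_one hb]
    exact hkey
  have hpow : A ^ (t+1) < 1 := lt_of_le_of_lt hchain hnum
  by_contra hcon
  push_neg at hcon
  have h1 : (1:ℝ) ^ (t+1) ≤ A ^ (t+1) := Real.rpow_le_rpow (by norm_num) hcon (by linarith)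
  rw [Real.one_rpow] at h1
  linarith
end
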